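/- The Klein-type metric F₁(x,y) = sqrt(((1+|x|²)|y|² - ⟨x,y⟩²))/(1+|x|²) on ℝⁿ satisfies Hamel's projective-flatness equations y^j ∂²F₁/(∂y^k ∂x^j) = ∂F₁/∂x^k for all k, at all (x,y) with y ≠ 0 and y not parallel to x in the degenerate sense (radicand positive). -/

import Mathlib

open Finset

/-- Partial derivative of `f` with respect to the `i`-th coordinate at `x`. -/
noncomputable def pd {n : ℕ} (i : Fin n) (f : (Fin n → ℝ) → ℝ) (x : Fin n → ℝ) : ℝ :=
  deriv (fun t => f (Function.update x i t)) (x i)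

/-- Partial derivative with respect to the `i`-th `x`-coordinate. -/
noncomputable def pdx {n : ℕ} (i : Fin n) (f : (Fin n → ℝ) → (Fin n → ℝ) → ℝ)
    (x y : Fin n → ℝ) : ℝ :=
  deriv (fun t => f (Function.update x i t) y) (x i)

/-- Partial derivative with respect to the `i`-th `y`-coordinate. -/
noncomputable def pdy {n : ℕ} (i : Fin n) (f : (Fin n → ℝ) → (Fin n → ℝ) → ℝ)
    (x y : Fin n → ℝ) : ℝ :=
  deriv (fun t => f x (Function.update y i t)) (y i)


lemma sum_update_sq {n : ℕ} (x : Fin n → ℝ) (j : Fin n) (t : ℝ) :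
    ∑ i, (Function.update x j t i) ^ 2 = (∑ i, (x i) ^ 2) + (t ^ 2 - (x j) ^ 2) := by
  have h : ∀ i : Fin n, (Function.update x j t i) ^ 2
      = Function.update (fun i => (x i) ^ 2) j (t ^ 2) i := by
    intro i
    by_cases h : i = j <;> simp [Function.update_apply, h]
  simp_rw [h]
  rw [Finset.sum_update_of_mem (Finset.mem_univ j),
    ← Finset.add_sum_erase _ _ (Finset.mem_univ j)]
  rw [Finset.sdiff_singleton_eq_erase]; ring

lemma sum_update_mul {n : ℕ} (x y : Fin n → ℝ) (j : Fin n) (t : ℝ) :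
    ∑ i, Function.update x j t i * y i = (∑ i, x i * y i) + (t - x j) * y j := by
  have h : ∀ i : Fin n, Function.update x j t i * y i
      = Function.update (fun i => x i * y i) j (t * y j) i := by
    intro i
    by_cases h : i = j <;> simp [Function.update_apply, h]
  simp_rw [h]
  rw [Finset.sum_update_of_mem (Finset.mem_univ j),
    ← Finset.add_sum_erase _ _ (Finset.mem_univ j)]
  rw [Finset.sdiff_singleton_eq_erase]; ring

lemma sum_update_mul' {n : ℕ} (x y : Fin n → ℝ) (k : Fin n) (t : ℝ) :
    ∑ i, x i * Function.update y k t i = (∑ i, x i * y i) + (t - y k) * x k := by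
  have h : ∀ i : Fin n, x i * Function.update y k t i
      = Function.update (fun i => x i * y i) k (x k * t) i := by
    intro i
    by_cases h : i = k <;> simp [Function.update_apply, h]
  simp_rw [h]
  rw [Finset.sum_update_of_mem (Finset.mem_univ k),
    ← Finset.add_sum_erase _ _ (Finset.mem_univ k)]
  rw [Finset.sdiff_singleton_eq_erase]; ring

lemma pdx_formula {n : ℕ} (F₁ : (Fin n → ℝ) → (Fin n → ℝ) → ℝ)
    (hF₁ : ∀ x y, F₁ x y =
      Real.sqrt ((1 + ∑ i, (x i) ^ 2) * (∑ i, (y i) ^ 2) - (∑ i, x i * y i) ^ 2)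
        / (1 + ∑ i, (x i) ^ 2))
    (j : Fin n) (x y : Fin n → ℝ)
    (hQ : 0 < (1 + ∑ i, (x i) ^ 2) * (∑ i, (y i) ^ 2) - (∑ i, x i * y i) ^ 2) :
    pdx j F₁ x y =
      (x j * (∑ i, (y i) ^ 2) - (∑ i, x i * y i) * y j)
        / ((1 + ∑ i, (x i) ^ 2) *
            Real.sqrt ((1 + ∑ i, (x i) ^ 2) * (∑ i, (y i) ^ 2) - (∑ i, x i * y i) ^ 2))
      - 2 * x j *
          Real.sqrt ((1 + ∑ i, (x i) ^ 2) * (∑ i, (y i) ^ 2) - (∑ i, x i * y i) ^ 2)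
        / (1 + ∑ i, (x i) ^ 2) ^ 2 := by
  have hfun : (fun t => F₁ (Function.update x j t) y)
      = fun t => Real.sqrt ((1 + (∑ i, (x i) ^ 2) + (t ^ 2 - (x j) ^ 2)) * (∑ i, (y i) ^ 2)
            - ((∑ i, x i * y i) + (t - x j) * y j) ^ 2)
          / (1 + (∑ i, (x i) ^ 2) + (t ^ 2 - (x j) ^ 2)) := by
    funext t
    rw [hF₁, sum_update_sq, sum_update_mul,
      show (1 + ((∑ i, (x i) ^ 2) + (t ^ 2 - (x j) ^ 2)))
        = (1 + (∑ i, (x i) ^ 2) + (t ^ 2 - (x j) ^ 2)) from by ring]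
  rw [pdx, hfun]
  have hA0 : (0:ℝ) < 1 + ∑ i, (x i) ^ 2 := by positivity
  have hb : HasDerivAt (fun t : ℝ => 1 + (∑ i, (x i) ^ 2) + (t ^ 2 - (x j) ^ 2))
      (2 * x j) (x j) := by
    simpa using ((hasDerivAt_pow 2 (x j)).sub_const ((x j) ^ 2)).const_add (1 + ∑ i, (x i) ^ 2)
  have hc : HasDerivAt (fun t : ℝ => (∑ i, x i * y i) + (t - x j) * y j) (y j) (x j) := by
    simpa using (((hasDerivAt_id (x j)).sub_const (x j)).mul_const (y j)).const_add
      (∑ i, x i * y i)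
  have hq : HasDerivAt (fun t : ℝ =>
      (1 + (∑ i, (x i) ^ 2) + (t ^ 2 - (x j) ^ 2)) * (∑ i, (y i) ^ 2)
        - ((∑ i, x i * y i) + (t - x j) * y j) ^ 2)
      (2 * x j * (∑ i, (y i) ^ 2) - 2 * ((∑ i, x i * y i) + (x j - x j) * y j) ^ 1 * y j)
      (x j) := (hb.mul_const _).sub (hc.pow 2)
  have hqval : (1 + (∑ i, (x i) ^ 2) + ((x j) ^ 2 - (x j) ^ 2)) * (∑ i, (y i) ^ 2)
      - ((∑ i, x i * y i) + (x j - x j) * y j) ^ 2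
      = (1 + ∑ i, (x i) ^ 2) * (∑ i, (y i) ^ 2) - (∑ i, x i * y i) ^ 2 := by ring
  have hqpos : (0:ℝ) < (1 + (∑ i, (x i) ^ 2) + ((x j) ^ 2 - (x j) ^ 2)) * (∑ i, (y i) ^ 2)
      - ((∑ i, x i * y i) + (x j - x j) * y j) ^ 2 := by rw [hqval]; exact hQ
  have hs := hq.sqrt (ne_of_gt hqpos)
  have hd := hs.div hb (by rw [show (1 + (∑ i, (x i) ^ 2) + ((x j) ^ 2 - (x j) ^ 2))
      = 1 + ∑ i, (x i) ^ 2 from by ring]; exact ne_of_gt hA0)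
  refine hd.deriv.trans ?_
  rw [show ((x j : ℝ) - x j) = 0 from by ring, show ((x j:ℝ) ^ 2 - (x j) ^ 2) = 0 from by ring]
  have hS0 : (0:ℝ) < Real.sqrt ((1 + ∑ i, (x i) ^ 2) * (∑ i, (y i) ^ 2) - (∑ i, x i * y i) ^ 2) :=
    Real.sqrt_pos.mpr hQ
  have hS2 := Real.sq_sqrt hQ.le
  set S := Real.sqrt ((1 + ∑ i, (x i) ^ 2) * (∑ i, (y i) ^ 2) - (∑ i, x i * y i) ^ 2) with hSdef
  set A := (1:ℝ) + ∑ i, (x i) ^ 2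
  set B := ∑ i, (y i) ^ 2
  set C := ∑ i, x i * y i
  rw [show A + 0 = A from by ring, show C + 0 * y j = C from by ring]
  rw [show Real.sqrt (A * B - C ^ 2) = S from rfl]
  field_simp

lemma pdy_pdx_formula {n : ℕ} (F₁ : (Fin n → ℝ) → (Fin n → ℝ) → ℝ)
    (hF₁ : ∀ x y, F₁ x y =
      Real.sqrt ((1 + ∑ i, (x i) ^ 2) * (∑ i, (y i) ^ 2) - (∑ i, x i * y i) ^ 2)
        / (1 + ∑ i, (x i) ^ 2))
    (j k : Fin n) (x y : Fin n → ℝ)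
    (hQ : 0 < (1 + ∑ i, (x i) ^ 2) * (∑ i, (y i) ^ 2) - (∑ i, x i * y i) ^ 2) :
    pdy k (fun x' y' => pdx j F₁ x' y') x y =
      ((2 * y k * x j - x k * y j - (∑ i, x i * y i) * (if j = k then (1:ℝ) else 0))
          * (1 + ∑ i, (x i) ^ 2)
          * ((1 + ∑ i, (x i) ^ 2) * (∑ i, (y i) ^ 2) - (∑ i, x i * y i) ^ 2)
        - (x j * (∑ i, (y i) ^ 2) - (∑ i, x i * y i) * y j) * (1 + ∑ i, (x i) ^ 2)
          * ((1 + ∑ i, (x i) ^ 2) * y k - (∑ i, x i * y i) * x k)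
        - 2 * x j * ((1 + ∑ i, (x i) ^ 2) * y k - (∑ i, x i * y i) * x k)
          * ((1 + ∑ i, (x i) ^ 2) * (∑ i, (y i) ^ 2) - (∑ i, x i * y i) ^ 2))
      / ((1 + ∑ i, (x i) ^ 2) ^ 2
          * ((1 + ∑ i, (x i) ^ 2) * (∑ i, (y i) ^ 2) - (∑ i, x i * y i) ^ 2)
          * Real.sqrt ((1 + ∑ i, (x i) ^ 2) * (∑ i, (y i) ^ 2) - (∑ i, x i * y i) ^ 2)) := by
  have hA0 : (0:ℝ) < 1 + ∑ i, (x i) ^ 2 := by positivity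
  set d : ℝ := if j = k then (1:ℝ) else 0 with hd
  -- q as a function of t
  set q : ℝ → ℝ := fun t =>
    (1 + ∑ i, (x i) ^ 2) * ((∑ i, (y i) ^ 2) + (t ^ 2 - (y k) ^ 2))
      - ((∑ i, x i * y i) + (t - y k) * x k) ^ 2 with hqdef
  have hqcont : Continuous q := by fun_prop
  have hqval : q (y k) = (1 + ∑ i, (x i) ^ 2) * (∑ i, (y i) ^ 2) - (∑ i, x i * y i) ^ 2 := by
    rw [hqdef]; ring
  have hqpos : 0 < q (y k) := by rw [hqval]; exact hQ
  have hev : ∀ᶠ t in nhds (y k), 0 < q t :=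
    (hqcont.continuousAt (x := y k)).eventually_const_lt hqpos
  -- eventual equality with the explicit formula
  have heq : (fun t => pdx j F₁ x (Function.update y k t)) =ᶠ[nhds (y k)]
      (fun t =>
        (x j * ((∑ i, (y i) ^ 2) + (t ^ 2 - (y k) ^ 2))
            - ((∑ i, x i * y i) + (t - y k) * x k) * (y j + (t - y k) * d))
          / ((1 + ∑ i, (x i) ^ 2) * Real.sqrt (q t))
        - 2 * x j * Real.sqrt (q t) / (1 + ∑ i, (x i) ^ 2) ^ 2) := by
    filter_upwards [hev] with t ht
    have h1 : ∑ i, (Function.update y k t i) ^ 2 = (∑ i, (y i) ^ 2) + (t ^ 2 - (y k) ^ 2) :=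
      sum_update_sq y k t
    have h2 : ∑ i, x i * Function.update y k t i = (∑ i, x i * y i) + (t - y k) * x k :=
      sum_update_mul' x y k t
    have h3 : Function.update y k t j = y j + (t - y k) * d := by
      by_cases h : j = k
      · subst h; rw [hd]; simp
      · rw [hd]; simp [Function.update_apply, h]
    rw [pdx_formula F₁ hF₁ j x (Function.update y k t) (by rw [h1, h2]; exact ht),
      h1, h2, h3]
  rw [pdy, heq.deriv_eq]
  -- derivative computation
  have hb : HasDerivAt (fun t : ℝ => (∑ i, (y i) ^ 2) + (t ^ 2 - (y k) ^ 2))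
      (2 * y k) (y k) := by
    simpa using ((hasDerivAt_pow 2 (y k)).sub_const ((y k) ^ 2)).const_add (∑ i, (y i) ^ 2)
  have hc : HasDerivAt (fun t : ℝ => (∑ i, x i * y i) + (t - y k) * x k) (x k) (y k) := by
    simpa using (((hasDerivAt_id (y k)).sub_const (y k)).mul_const (x k)).const_add
      (∑ i, x i * y i)
  have hu : HasDerivAt (fun t : ℝ => y j + (t - y k) * d) d (y k) := by
    simpa using (((hasDerivAt_id (y k)).sub_const (y k)).mul_const d).const_add (y j)
  have hN : HasDerivAt (fun t : ℝ =>
      x j * ((∑ i, (y i) ^ 2) + (t ^ 2 - (y k) ^ 2))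
        - ((∑ i, x i * y i) + (t - y k) * x k) * (y j + (t - y k) * d))
      (x j * (2 * y k) - (x k * (y j + (y k - y k) * d)
        + ((∑ i, x i * y i) + (y k - y k) * x k) * d)) (y k) :=
    (hb.const_mul (x j)).sub (hc.mul hu)
  have hq : HasDerivAt q
      (2 * y k * (1 + ∑ i, (x i) ^ 2)
        - 2 * ((∑ i, x i * y i) + (y k - y k) * x k) ^ 1 * x k) (y k) := by
    rw [hqdef]
    have := ((hb.const_mul (1 + ∑ i, (x i) ^ 2)).sub (hc.pow 2))
    refine this.congr_deriv ?_
    ring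
  have hs := hq.sqrt (ne_of_gt hqpos)
  have hden := hs.const_mul (1 + ∑ i, (x i) ^ 2)
  have hf1 := hN.div hden (by
    have : 0 < Real.sqrt (q (y k)) := Real.sqrt_pos.mpr hqpos
    positivity)
  have hf2 := (hs.const_mul (2 * x j)).div_const ((1 + ∑ i, (x i) ^ 2) ^ 2)
  have hG := hf1.sub hf2
  refine hG.deriv.trans ?_
  -- now pure algebra
  rw [hqval]
  rw [show ((y k : ℝ) - y k) = 0 from by ring]
  have hS0 : (0:ℝ) < Real.sqrt ((1 + ∑ i, (x i) ^ 2) * (∑ i, (y i) ^ 2) - (∑ i, x i * y i) ^ 2) :=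
    Real.sqrt_pos.mpr hQ
  have hS2 := Real.sq_sqrt hQ.le
  set S := Real.sqrt ((1 + ∑ i, (x i) ^ 2) * (∑ i, (y i) ^ 2) - (∑ i, x i * y i) ^ 2) with hSdef
  set A := (1:ℝ) + ∑ i, (x i) ^ 2
  set B := ∑ i, (y i) ^ 2
  set C := ∑ i, x i * y i
  rw [show ((y k:ℝ) ^ 2 - (y k) ^ 2) = 0 from by ring]
  rw [show B + 0 = B from by ring, show C + 0 * x k = C from by ring,
    show y j + 0 * d = y j from by ring]
  rw [← hS2]
  field_simp
  ring_nf

/-- The Klein-type metric `F₁` satisfies Hamel's projective-flatness equations. -/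
theorem stmt9 (n : ℕ) (hn : 1 ≤ n)
    (F₁ : (Fin n → ℝ) → (Fin n → ℝ) → ℝ)
    (hF₁ : ∀ x y, F₁ x y =
      Real.sqrt ((1 + ∑ i, (x i) ^ 2) * (∑ i, (y i) ^ 2) - (∑ i, x i * y i) ^ 2)
        / (1 + ∑ i, (x i) ^ 2)) :
    ∀ x y : Fin n → ℝ, y ≠ 0 →
      0 < (1 + ∑ i, (x i) ^ 2) * (∑ i, (y i) ^ 2) - (∑ i, x i * y i) ^ 2 →
      ∀ k, (∑ j, y j * pdy k (fun x' y' => pdx j F₁ x' y') x y) = pdx k F₁ x y := by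
  intro x y hy hQ k
  rw [Finset.sum_congr rfl (fun j _ => by
    rw [pdy_pdx_formula F₁ hF₁ j k x y hQ]),
    pdx_formula F₁ hF₁ k x y hQ]
  have hA0 : (0:ℝ) < 1 + ∑ i, (x i) ^ 2 := by positivity
  have hS0 : (0:ℝ) < Real.sqrt ((1 + ∑ i, (x i) ^ 2) * (∑ i, (y i) ^ 2) - (∑ i, x i * y i) ^ 2) :=
    Real.sqrt_pos.mpr hQ
  have hS2 := Real.sq_sqrt hQ.le
  set S := Real.sqrt ((1 + ∑ i, (x i) ^ 2) * (∑ i, (y i) ^ 2) - (∑ i, x i * y i) ^ 2) with hSdef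
  set A := (1:ℝ) + ∑ i, (x i) ^ 2 with hAdef
  set B := ∑ i, (y i) ^ 2 with hBdef
  set C := ∑ i, x i * y i with hCdef
  have hQ' : (0:ℝ) < A * B - C ^ 2 := hQ
  -- pull out the constant denominator and expand the numerator linearly
  have expand : ∀ j ∈ Finset.univ, y j *
      (((2 * y k * x j - x k * y j - C * (if j = k then (1:ℝ) else 0)) * A * (A * B - C ^ 2)
        - (x j * B - C * y j) * A * (A * y k - C * x k)
        - 2 * x j * (A * y k - C * x k) * (A * B - C ^ 2))
        / (A ^ 2 * (A * B - C ^ 2) * S)) =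
      ((2 * y k * A * (A * B - C ^ 2) - A * B * (A * y k - C * x k)
          - 2 * (A * y k - C * x k) * (A * B - C ^ 2)) * (x j * y j)
        + (-(x k * A * (A * B - C ^ 2)) + A * C * (A * y k - C * x k)) * (y j ^ 2)
        + (-(C * A * (A * B - C ^ 2))) * (y j * (if j = k then (1:ℝ) else 0)))
        / (A ^ 2 * (A * B - C ^ 2) * S) := by
    intro j _
    rw [← mul_div_assoc]
    congr 1
    ring
  rw [Finset.sum_congr rfl expand]
  rw [← Finset.sum_div]
  rw [Finset.sum_add_distrib, Finset.sum_add_distrib, ← Finset.mul_sum, ← Finset.mul_sum,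
    ← Finset.mul_sum]
  have e1 : ∑ j, x j * y j = C := hCdef.symm
  have e2 : ∑ j, (y j) ^ 2 = B := hBdef.symm
  have e3 : ∑ j, y j * (if j = k then (1:ℝ) else 0) = y k := by
    simp [mul_ite]
  rw [e1, e2, e3]
  field_simp
  linear_combination (2 * x k * (A * B - C ^ 2)) * hS2
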